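/- In the three-covariate counterexample, b̃ = (1,0,1) belongs to Θ (X'b̃ and X'β have the same sign almost surely) but b̃ ∉ Θ̲: taking γ = (1,0,0), the event {X'b̃ < 0 and X₁ > 0} has positive probability while P(Y=1|X₁ = s) ≥ τ for all s ≥ 0, so X'b̃·[P(Y=1|X'γ) − τ] < 0 with positive probability. Hence Θ̲ can be a proper subset of Θ. -/

import Mathlib

open MeasureTheory ProbabilityTheory Set

/-- The uniform probability measure on the interval `(a, b)`. -/
noncomputable def uniformOnIoo (a b : ℝ) : Measure ℝ :=
  (ENNReal.ofReal (b - a))⁻¹ • (volume.restrict (Ioo a b))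

/-- Conditional expectation of `f` given the σ-algebra generated by the random element `X`. -/
noncomputable def condExpGiven {Ω 𝓧 : Type*} [MeasurableSpace Ω] [MeasurableSpace 𝓧]
    (μ : Measure Ω) (X : Ω → 𝓧) (f : Ω → ℝ) : Ω → ℝ :=
  μ[f | MeasurableSpace.comap X inferInstance]

lemma uniformOnIoo_apply (a b : ℝ) (s : Set ℝ) :
    uniformOnIoo a b s = (ENNReal.ofReal (b - a))⁻¹ * volume (s ∩ Ioo a b) := by
  rw [uniformOnIoo, Measure.smul_apply, Measure.restrict_apply' measurableSet_Ioo, smul_eq_mul]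

lemma uniformOnIoo_isProb {a b : ℝ} (hab : a < b) :
    IsProbabilityMeasure (uniformOnIoo a b) := by
  constructor
  rw [uniformOnIoo_apply, Set.univ_inter, Real.volume_Ioo]
  exact ENNReal.inv_mul_cancel (by simpa using sub_pos.2 hab) ENNReal.ofReal_ne_top

lemma uniformOnIoo_compl {a b : ℝ} : uniformOnIoo a b (Ioo a b)ᶜ = 0 := by
  rw [uniformOnIoo_apply, Set.compl_inter_self, measure_empty, mul_zero]

lemma uniformOnIoo_ae_mem {a b : ℝ} : ∀ᵐ x ∂(uniformOnIoo a b), x ∈ Ioo a b := by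
  filter_upwards [measure_eq_zero_iff_ae_notMem.mp uniformOnIoo_compl] with x hx
  simpa using hx

lemma ae_mem_of_map_uniform {Ω : Type*} [MeasurableSpace Ω] {μ : Measure Ω} {X : Ω → ℝ}
    (hX : Measurable X) {a b : ℝ} (h : μ.map X = uniformOnIoo a b) :
    ∀ᵐ ω ∂μ, X ω ∈ Ioo a b := by
  have : μ (X ⁻¹' (Ioo a b)ᶜ) = 0 := by
    rw [← Measure.map_apply hX measurableSet_Ioo.compl, h, uniformOnIoo_compl]
  filter_upwards [measure_eq_zero_iff_ae_notMem.mp this] with ω hω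
  simpa using hω

lemma uniformOnIoo_map_neg :
    (uniformOnIoo (-1) 1).map (fun x : ℝ => -x) = uniformOnIoo (-1) 1 := by
  have hpre : (fun x : ℝ => -x) ⁻¹' Ioo (-1) 1 = Ioo (-1) 1 := by
    ext x
    simp only [mem_preimage, mem_Ioo]
    constructor <;> rintro ⟨h1, h2⟩ <;> constructor <;> linarith
  rw [uniformOnIoo, Measure.map_smul]
  congr 1
  conv_lhs => rw [← hpre]
  rw [← measurableEmbedding_neg.restrict_map, Measure.map_neg_eq_self (volume : Measure ℝ)]

lemma uniformOnIoo_pos {a b u v : ℝ} (h1 : a ≤ u) (h2 : u < v) (h3 : v ≤ b) :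
    0 < uniformOnIoo a b (Ioo u v) := by
  rw [uniformOnIoo_apply, Set.inter_eq_self_of_subset_left (Ioo_subset_Ioo h1 h3),
    Real.volume_Ioo]
  refine ENNReal.mul_pos ?_ ?_
  · exact ENNReal.inv_ne_zero.2 ENNReal.ofReal_ne_top
  · simpa using sub_pos.2 h2

lemma Hcont : Continuous (fun p : ℝ × ℝ => (p.1 + p.2) / Real.sqrt (1 + p.2 ^ 2)) := by
  refine Continuous.div (continuous_fst.add continuous_snd)
    (Real.continuous_sqrt.comp (continuous_const.add (continuous_snd.pow 2))) ?_
  intro p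
  exact ne_of_gt (Real.sqrt_pos.2 (by positivity))

lemma key_ineq {τ c : ℝ} (hc : 0 < c) {F : ℝ → ℝ} (hFmono : Monotone F)
    (hFlin : ∀ t ∈ Ioc (-1:ℝ) 1, F t = τ + c * t)
    {s x : ℝ} (hs0 : 0 ≤ s) (hs1 : s < 1) (hx1 : -1 < x) (hx2 : x < 1) :
    2 * τ + c * s ≤ F ((s + x) / Real.sqrt (1 + x ^ 2))
      + F ((s - x) / Real.sqrt (1 + x ^ 2)) := by
  set w : ℝ := Real.sqrt (1 + x ^ 2) with hw
  have hw0 : 0 < w := Real.sqrt_pos.2 (by positivity)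
  have hw2 : w ^ 2 = 1 + x ^ 2 := Real.sq_sqrt (by positivity)
  have hw1 : 1 ≤ w := Real.one_le_sqrt.2 (by nlinarith)
  have hwle2 : w ≤ 2 := by nlinarith
  have ha_lb : -1 < (s + x) / w := by
    rw [lt_div_iff₀ hw0]; nlinarith
  have hb_lb : -1 < (s - x) / w := by
    rw [lt_div_iff₀ hw0]; nlinarith
  have hF1 : F 1 = τ + c := by
    have := hFlin 1 ⟨by norm_num, le_rfl⟩; linarith
  rcases le_or_gt ((s + x) / w) 1 with ha1 | ha1
  · rcases le_or_gt ((s - x) / w) 1 with hb1 | hb1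
    · rw [hFlin _ ⟨ha_lb, ha1⟩, hFlin _ ⟨hb_lb, hb1⟩]
      have h1 : (s + x) / w + (s - x) / w = 2 * s / w := by
        rw [← add_div]; ring_nf
      have h2 : c * s ≤ c * ((s + x) / w) + c * ((s - x) / w) := by
        rw [← mul_add, h1]
        have : s ≤ 2 * s / w := by
          rw [le_div_iff₀ hw0]; nlinarith
        exact mul_le_mul_of_nonneg_left this hc.le
      linarith
    · have hsx : w < s - x := by have := (lt_div_iff₀ hw0).1 hb1; linarith
      rw [hFlin _ ⟨ha_lb, ha1⟩]
      have hFb : τ + c ≤ F ((s - x) / w) := by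
        rw [← hF1]; exact hFmono hb1.le
      have haw : s - 1 ≤ (s + x) / w := by
        rw [le_div_iff₀ hw0]; nlinarith
      nlinarith [mul_le_mul_of_nonneg_left haw hc.le]
  · have hsx : w < s + x := by have := (lt_div_iff₀ hw0).1 ha1; linarith
    have hb1 : (s - x) / w ≤ 1 := by
      rw [div_le_iff₀ hw0]; nlinarith
    rw [hFlin _ ⟨hb_lb, hb1⟩]
    have hFa : τ + c ≤ F ((s + x) / w) := by
      rw [← hF1]; exact hFmono ha1.le
    have hbw : s - 1 ≤ (s - x) / w := by
      rw [le_div_iff₀ hw0]; nlinarith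
    nlinarith [mul_le_mul_of_nonneg_left hbw hc.le]

/-- In the three-covariate counterexample, `b̃ = (1,0,1)` belongs to `Θ`
(`X'b̃ = X₁+X₃` and `X'β = X₁+X₂` have the same sign a.s.) but `b̃ ∉ Θ̲`: taking
`γ = (1,0,0)` (so `X'γ = X₁`), the event `{X'b̃ < 0 and X₁ > 0}` has positive probability
while `P(Y=1|X₁=s) ≥ τ` for all `s ≥ 0`, so `X'b̃·[P(Y=1|X'γ) − τ] < 0` with positive
probability. Hence `Θ̲` can be a proper subset of `Θ`. -/
theorem counterexample_theta_underbar_proper {Ω : Type*} [MeasurableSpace Ω]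
    (μ : Measure Ω) [IsProbabilityMeasure μ]
    (τ c : ℝ) (hτ : τ ∈ Ioo (0:ℝ) 1) (hc : c ∈ Ioo (0:ℝ) (min τ (1 - τ)))
    (X1 X2 T1 T2 ξ : Ω → ℝ)
    (hX1 : Measurable X1) (hX2 : Measurable X2) (hT1 : Measurable T1)
    (hT2 : Measurable T2) (hξ : Measurable ξ)
    (hlawX1 : μ.map X1 = uniformOnIoo (-1) 1)
    (hlawX2 : μ.map X2 = uniformOnIoo (-1) 1)
    (hlawT1 : μ.map T1 = uniformOnIoo 1 2)
    (hlawT2 : μ.map T2 = uniformOnIoo (-2) (-1))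
    (hindep : iIndepFun
      ![X1, X2, T1, T2, ξ] μ)
    -- X₃ = T₁ if X₁+X₂ ≥ 0 and X₃ = T₂ if X₁+X₂ < 0
    (X3 : Ω → ℝ)
    (hX3 : ∀ ω, X3 ω = if 0 ≤ X1 ω + X2 ω then T1 ω else T2 ω)
    -- F_ξ is the cdf of ξ: continuous, strictly increasing, equal to τ + ct on (−1,1]
    (Fξ : ℝ → ℝ)
    (hcdf : ∀ t, (μ {ω | ξ ω ≤ t}).toReal = Fξ t)
    (hFcont : Continuous Fξ) (hFmono : StrictMono Fξ)
    (hFlin : ∀ t ∈ Ioc (-1:ℝ) 1, Fξ t = τ + c * t)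
    -- Y = 1{X'β ≥ ε} with β = (1,1,0) and ε = √(1+X₂²)·ξ
    (Y : Ω → ℝ)
    (hY : ∀ ω, Y ω =
      if Real.sqrt (1 + X2 ω ^ 2) * ξ ω ≤ X1 ω + X2 ω then 1 else 0) :
    -- b̃ = (1,0,1) ∈ Θ: (X'b̃)(X'β) ≥ 0 a.s.
    (∀ᵐ ω ∂μ, (X1 ω + X3 ω) * (X1 ω + X2 ω) ≥ 0) ∧
    -- the event {X'b̃ < 0 and X₁ > 0} has positive probability
    (0 < μ {ω | X1 ω + X3 ω < 0 ∧ 0 < X1 ω}) ∧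
    -- P(Y=1|X₁) ≥ τ on {X₁ ≥ 0} almost surely
    (∀ᵐ ω ∂μ, 0 ≤ X1 ω → τ ≤ condExpGiven μ X1 Y ω) ∧
    -- b̃ ∉ Θ̲: X'b̃·[P(Y=1|X'γ) − τ] < 0 with positive probability for γ = (1,0,0)
    ¬ (∀ᵐ ω ∂μ, (X1 ω + X3 ω) * (condExpGiven μ X1 Y ω - τ) ≥ 0) := by
  obtain ⟨hτ0, hτ1⟩ := hτ
  obtain ⟨hc0, hcm⟩ := hc
  have hX1m := ae_mem_of_map_uniform hX1 hlawX1
  have hX2m := ae_mem_of_map_uniform hX2 hlawX2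
  have hT1m := ae_mem_of_map_uniform hT1 hlawT1
  have hT2m := ae_mem_of_map_uniform hT2 hlawT2
  -- Part 1
  have part1 : ∀ᵐ ω ∂μ, (X1 ω + X3 ω) * (X1 ω + X2 ω) ≥ 0 := by
    filter_upwards [hX1m, hT1m, hT2m] with ω h1 h3 h4
    obtain ⟨h1a, h1b⟩ := h1
    rw [hX3 ω]
    rcases le_or_gt 0 (X1 ω + X2 ω) with h | h
    · rw [if_pos h]
      obtain ⟨h3a, h3b⟩ := h3
      nlinarith
    · rw [if_neg (not_le.2 h)]
      obtain ⟨h4a, h4b⟩ := h4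
      nlinarith
  -- the positive-probability event
  set A : Set Ω := X1 ⁻¹' Ioo 0 (1/2) ∩ X2 ⁻¹' Ioo (-1) (-1/2) with hA_def
  have hind12 : IndepFun X1 X2 μ := hindep.indepFun (show (0 : Fin 5) ≠ 1 by decide)
  have hApos : 0 < μ A := by
    have hmul : μ A = μ (X1 ⁻¹' Ioo 0 (1/2)) * μ (X2 ⁻¹' Ioo (-1) (-1/2)) :=
      hind12.measure_inter_preimage_eq_mul _ _ measurableSet_Ioo measurableSet_Ioo
    have e1 : μ (X1 ⁻¹' Ioo 0 (1/2)) = uniformOnIoo (-1) 1 (Ioo 0 (1/2)) := by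
      rw [← hlawX1, Measure.map_apply hX1 measurableSet_Ioo]
    have e2 : μ (X2 ⁻¹' Ioo (-1) (-1/2)) = uniformOnIoo (-1) 1 (Ioo (-1) (-1/2)) := by
      rw [← hlawX2, Measure.map_apply hX2 measurableSet_Ioo]
    rw [hmul, e1, e2]
    exact ENNReal.mul_pos (uniformOnIoo_pos (by norm_num) (by norm_num) (by norm_num)).ne'
      (uniformOnIoo_pos (by norm_num) (by norm_num) (by norm_num)).ne'
  -- Part 2
  have part2 : 0 < μ {ω | X1 ω + X3 ω < 0 ∧ 0 < X1 ω} := by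
    have hbad : μ {ω | T2 ω ∉ Ioo (-2:ℝ) (-1)} = 0 := by
      rw [← MeasureTheory.ae_iff]
      exact hT2m
    have hsub : A ⊆ {ω | X1 ω + X3 ω < 0 ∧ 0 < X1 ω} ∪ {ω | T2 ω ∉ Ioo (-2:ℝ) (-1)} := by
      rintro ω ⟨hω1, hω2⟩
      by_cases hT : T2 ω ∈ Ioo (-2:ℝ) (-1)
      · left
        obtain ⟨ha, hb⟩ := hω1
        obtain ⟨hc', hd⟩ := hω2
        have hsum : X1 ω + X2 ω < 0 := by linarith
        have : X3 ω = T2 ω := by rw [hX3 ω, if_neg (not_le.2 hsum)]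
        obtain ⟨he, hf⟩ := hT
        exact ⟨by rw [this]; linarith, ha⟩
      · right; exact hT
    calc 0 < μ A := hApos
      _ ≤ μ ({ω | X1 ω + X3 ω < 0 ∧ 0 < X1 ω} ∪ {ω | T2 ω ∉ Ioo (-2:ℝ) (-1)}) :=
          measure_mono hsub
      _ ≤ μ {ω | X1 ω + X3 ω < 0 ∧ 0 < X1 ω} + μ {ω | T2 ω ∉ Ioo (-2:ℝ) (-1)} :=
          measure_union_le _ _
      _ = μ {ω | X1 ω + X3 ω < 0 ∧ 0 < X1 ω} := by rw [hbad, add_zero]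
  -- setup for the conditional expectation
  set ν : Measure ℝ := uniformOnIoo (-1) 1 with hν_def
  haveI hνP : IsProbabilityMeasure ν := uniformOnIoo_isProb (by norm_num)
  set νξ : Measure ℝ := μ.map ξ with hνξ_def
  haveI hνξP : IsProbabilityMeasure νξ := Measure.isProbabilityMeasure_map hξ.aemeasurable
  have hFval : ∀ t, Fξ t = (νξ (Iic t)).toReal := by
    intro t
    rw [← hcdf t, hνξ_def, Measure.map_apply hξ measurableSet_Iic]
    rfl
  have hF0 : ∀ t, 0 ≤ Fξ t := fun t => by rw [hFval]; exact ENNReal.toReal_nonneg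
  have hF1' : ∀ t, Fξ t ≤ 1 := by
    intro t
    rw [hFval]
    exact ENNReal.toReal_le_of_le_ofReal zero_le_one (by simpa using prob_le_one)
  have hcdf_int : ∀ t, ∫ u, (if u ≤ t then (1:ℝ) else 0) ∂νξ = Fξ t := by
    intro t
    have he : (fun u => if u ≤ t then (1:ℝ) else 0) = (Iic t).indicator (fun _ => (1:ℝ)) := by
      funext u; simp [Set.indicator_apply, Set.mem_Iic]
    rw [he, integral_indicator_const (1:ℝ) measurableSet_Iic, smul_eq_mul, mul_one, hFval, measureReal_def]
  set H : ℝ → ℝ → ℝ := fun s x => (s + x) / Real.sqrt (1 + x ^ 2) with hH_def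
  have hHcont : Continuous (fun p : ℝ × ℝ => H p.1 p.2) := Hcont
  have hHcontR : ∀ s : ℝ, Continuous (fun x => H s x) :=
    fun s => Hcont.comp (continuous_const.prodMk continuous_id)
  have hHcontN : ∀ s : ℝ, Continuous (fun x => H s (-x)) :=
    fun s => (hHcontR s).comp continuous_neg
  have hFHcont : Continuous (fun p : ℝ × ℝ => Fξ (H p.1 p.2)) := hFcont.comp hHcont
  set g : ℝ → ℝ := fun s => ∫ x, Fξ (H s x) ∂ν with hg_def
  have hgsm : StronglyMeasurable g :=
    hFHcont.stronglyMeasurable.integral_prod_right'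
  have hintc : ∀ (ρ : Measure ℝ) [IsProbabilityMeasure ρ] (φ : ℝ → ℝ), Continuous φ →
      Integrable (fun x => Fξ (φ x)) ρ := by
    intro ρ _ φ hφ
    refine Integrable.mono' (integrable_const 1) (hFcont.comp hφ).aestronglyMeasurable ?_
    filter_upwards with x
    rw [Real.norm_eq_abs, abs_le]
    exact ⟨by linarith [hF0 (φ x)], hF1' _⟩
  have hg01 : ∀ s, 0 ≤ g s ∧ g s ≤ 1 := by
    intro s
    constructor
    · exact integral_nonneg fun x => hF0 _
    · calc g s ≤ ∫ _, (1:ℝ) ∂ν := by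
            apply integral_mono (hintc ν _ (hHcontR s)) (integrable_const 1)
            intro x; exact hF1' _
        _ = 1 := by simp
  -- the lower bound for g
  have hg_ge : ∀ s, 0 ≤ s → s < 1 → τ + c * s / 2 ≤ g s := by
    intro s h0 h1
    have hsymm : ∫ x, Fξ (H s (-x)) ∂ν = g s := by
      have h1 : ∫ y, Fξ (H s y) ∂(ν.map (fun y : ℝ => -y)) = ∫ x, Fξ (H s (-x)) ∂ν :=
        integral_map measurable_neg.aemeasurable
          (hFcont.comp (hHcontR s)).aestronglyMeasurable
      have h2 : ν.map (fun y : ℝ => -y) = ν := by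
        rw [hν_def]; exact uniformOnIoo_map_neg
      rw [← h1, h2]
    have hi1 : Integrable (fun x => Fξ (H s x)) ν := hintc ν _ (hHcontR s)
    have hi2 : Integrable (fun x => Fξ (H s (-x))) ν := hintc ν _ (hHcontN s)
    have hadd : ∫ x, (Fξ (H s x) + Fξ (H s (-x))) ∂ν = g s + g s := by
      rw [integral_add hi1 hi2, hsymm]
    have hmono : 2 * τ + c * s ≤ ∫ x, (Fξ (H s x) + Fξ (H s (-x))) ∂ν := by
      have : ∫ _, (2 * τ + c * s : ℝ) ∂ν = 2 * τ + c * s := by simp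
      rw [← this]
      apply integral_mono_ae (integrable_const _) (hi1.add hi2)
      filter_upwards [uniformOnIoo_ae_mem (a := -1) (b := 1)] with x hx
      have hk := key_ineq hc0 hFmono.monotone hFlin h0 h1 hx.1 hx.2
      show 2 * τ + c * s ≤ Fξ (H s x) + Fξ (H s (-x))
      have e1 : H s x = (s + x) / Real.sqrt (1 + x ^ 2) := rfl
      have e2 : H s (-x) = (s - x) / Real.sqrt (1 + x ^ 2) := by
        show (s + -x) / Real.sqrt (1 + (-x) ^ 2) = _
        rw [show ((-x : ℝ)) ^ 2 = x ^ 2 by ring]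
        ring_nf
      rw [e1, e2]
      linarith
    linarith [hadd ▸ hmono]
  -- measurability of Y
  have hY'' : Y = fun ω => if Real.sqrt (1 + X2 ω ^ 2) * ξ ω ≤ X1 ω + X2 ω then (1:ℝ) else 0 :=
    funext hY
  have hYmeas : Measurable Y := by
    rw [hY'']
    refine Measurable.ite (measurableSet_le ?_ ?_) measurable_const measurable_const
    · exact ((Real.continuous_sqrt.measurable.comp
        ((measurable_const.add (hX2.pow_const 2)))).mul hξ)
    · exact hX1.add hX2
  have hYbd : ∀ ω, ‖Y ω‖ ≤ 1 := by
    intro ω; rw [hY ω]; split <;> simp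
  have hYint : Integrable Y μ := by
    refine Integrable.mono' (integrable_const 1) hYmeas.aestronglyMeasurable ?_
    filter_upwards with ω using hYbd ω
  have hY' : ∀ ω, Y ω = (if ξ ω ≤ H (X1 ω) (X2 ω) then (1:ℝ) else 0) := by
    intro ω
    rw [hY ω]
    have hw0 : 0 < Real.sqrt (1 + X2 ω ^ 2) := Real.sqrt_pos.2 (by positivity)
    have hiff : (ξ ω ≤ H (X1 ω) (X2 ω)) ↔
        (Real.sqrt (1 + X2 ω ^ 2) * ξ ω ≤ X1 ω + X2 ω) := by
      rw [show H (X1 ω) (X2 ω) = (X1 ω + X2 ω) / Real.sqrt (1 + X2 ω ^ 2) from rfl,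
        le_div_iff₀ hw0, mul_comm]
    exact if_congr hiff.symm rfl rfl
  -- joint law
  have hX2ξ : IndepFun X2 ξ μ := hindep.indepFun (show (1 : Fin 5) ≠ 4 by decide)
  have hmap2 : μ.map (fun ω => (X2 ω, ξ ω)) = ν.prod νξ :=
    ((indepFun_iff_map_prod_eq_prod_map_map hX2.aemeasurable hξ.aemeasurable).1 hX2ξ).trans
      (by rw [hlawX2, ← hνξ_def])
  have hmeas5 : ∀ i, Measurable (![X1, X2, T1, T2, ξ] i) := by
    intro i; fin_cases i <;> assumption
  have hX1pair : IndepFun X1 (fun ω => (X2 ω, ξ ω)) μ := by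
    have := hindep.indepFun_prodMk hmeas5 1 4 0 (by decide) (by decide)
    exact this.symm
  have hmapAll : μ.map (fun ω => (X1 ω, (X2 ω, ξ ω))) = ν.prod (ν.prod νξ) :=
    ((indepFun_iff_map_prod_eq_prod_map_map hX1.aemeasurable
      (hX2.prodMk hξ).aemeasurable).1 hX1pair).trans (by rw [hlawX1, hmap2])
  -- key set-integral identity
  have hsetint : ∀ B : Set ℝ, MeasurableSet B →
      ∫ ω in X1 ⁻¹' B, Y ω ∂μ = ∫ t in B, g t ∂ν := by
    intro B hB
    set Φ : ℝ × (ℝ × ℝ) → ℝ := fun p =>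
      (B.indicator (fun _ => (1:ℝ)) p.1) * (if p.2.2 ≤ H p.1 p.2.1 then 1 else 0) with hΦ_def
    have hΦmeas : Measurable Φ := by
      apply Measurable.mul
      · exact (measurable_const.indicator hB).comp measurable_fst
      · refine Measurable.ite (measurableSet_le (measurable_snd.comp measurable_snd) ?_)
          measurable_const measurable_const
        exact (hHcont.comp (continuous_fst.prodMk
          (continuous_fst.comp continuous_snd))).measurable
    have hΦbd : ∀ p, ‖Φ p‖ ≤ 1 := by
      intro p
      simp only [hΦ_def]
      rw [Real.norm_eq_abs, abs_mul]
      refine mul_le_one₀ ?_ (abs_nonneg _) ?_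
      · rw [abs_le]
        by_cases h : p.1 ∈ B <;> simp [Set.indicator_apply, h]
      · rw [abs_le]; split <;> norm_num
    have hΦint : Integrable Φ (ν.prod (ν.prod νξ)) := by
      refine Integrable.mono' (integrable_const 1) hΦmeas.aestronglyMeasurable ?_
      filter_upwards with p using hΦbd p
    have h1 : ∫ ω in X1 ⁻¹' B, Y ω ∂μ
        = ∫ ω, (B.indicator (fun _ => (1:ℝ)) (X1 ω)) * Y ω ∂μ := by
      rw [← integral_indicator (hX1 hB)]
      congr 1
      funext ω
      by_cases h : X1 ω ∈ B <;> simp [Set.indicator_apply, h]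
    have h2 : ∫ ω, (B.indicator (fun _ => (1:ℝ)) (X1 ω)) * Y ω ∂μ
        = ∫ p, Φ p ∂(μ.map (fun ω => (X1 ω, (X2 ω, ξ ω)))) := by
      rw [integral_map (hX1.prodMk (hX2.prodMk hξ)).aemeasurable
        hΦmeas.aestronglyMeasurable]
      congr 1
      funext ω
      simp only [hΦ_def]
      rw [hY' ω]
    have hinner : ∀ s : ℝ, ∫ q, (if q.2 ≤ H s q.1 then (1:ℝ) else 0) ∂(ν.prod νξ) = g s := by
      intro s
      have hqmeas : Measurable (fun q : ℝ × ℝ => (if q.2 ≤ H s q.1 then (1:ℝ) else 0)) := by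
        refine Measurable.ite (measurableSet_le measurable_snd ?_) measurable_const
          measurable_const
        exact (hHcont.comp (continuous_const.prodMk continuous_fst)).measurable
      have hqint : Integrable (fun q : ℝ × ℝ => (if q.2 ≤ H s q.1 then (1:ℝ) else 0))
          (ν.prod νξ) := by
        refine Integrable.mono' (integrable_const 1) hqmeas.aestronglyMeasurable ?_
        filter_upwards with q
        rw [Real.norm_eq_abs, abs_le]; constructor <;> [skip; skip] <;> split <;> norm_num
      rw [integral_prod _ hqint, hg_def]
      exact integral_congr_ae (Filter.Eventually.of_forall fun x => hcdf_int (H s x))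
    have h3 : ∀ s : ℝ, ∫ q, Φ (s, q) ∂(ν.prod νξ)
        = (B.indicator (fun _ => (1:ℝ)) s) * g s := by
      intro s
      simp only [hΦ_def]
      rw [integral_const_mul, hinner s]
    rw [h1, h2, hmapAll, integral_prod _ hΦint]
    simp_rw [h3]
    rw [← integral_indicator hB]
    congr 1
    funext s
    by_cases h : s ∈ B <;> simp [Set.indicator_apply, h]
  -- conditional expectation identification
  have hm : MeasurableSpace.comap X1 inferInstance ≤ _ := hX1.comap_le
  have hgX1sm : StronglyMeasurable[MeasurableSpace.comap X1 inferInstance]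
      (fun ω => g (X1 ω)) := by
    exact hgsm.comp_measurable (Measurable.of_comap_le le_rfl)
  have hgX1int : Integrable (fun ω => g (X1 ω)) μ := by
    refine Integrable.mono' (integrable_const 1)
      (hgsm.comp_measurable hX1).aestronglyMeasurable ?_
    filter_upwards with ω
    rw [Real.norm_eq_abs, abs_le]
    exact ⟨by linarith [(hg01 (X1 ω)).1], (hg01 (X1 ω)).2⟩
  have hcond : (fun ω => g (X1 ω)) =ᵐ[μ] condExpGiven μ X1 Y := by
    unfold condExpGiven
    refine ae_eq_condExp_of_forall_setIntegral_eq hm hYint ?_ ?_ ?_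
    · intro s _ _
      exact hgX1int.integrableOn
    · rintro s ⟨B, hB, rfl⟩ -
      calc ∫ ω in X1 ⁻¹' B, g (X1 ω) ∂μ
          = ∫ t in B, g t ∂(μ.map X1) :=
            (setIntegral_map hB hgsm.aestronglyMeasurable hX1.aemeasurable).symm
        _ = ∫ t in B, g t ∂ν := by rw [hlawX1]
        _ = ∫ ω in X1 ⁻¹' B, Y ω ∂μ := (hsetint B hB).symm
    · exact hgX1sm.aestronglyMeasurable
  -- Part 3
  have part3 : ∀ᵐ ω ∂μ, 0 ≤ X1 ω → τ ≤ condExpGiven μ X1 Y ω := by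
    filter_upwards [hcond, hX1m] with ω hω h1 h0
    rw [← hω]
    have := hg_ge (X1 ω) h0 h1.2
    nlinarith [mul_nonneg hc0.le h0]
  refine ⟨part1, part2, part3, ?_⟩
  -- Part 4
  intro hcontra
  have hbadA : ∀ᵐ ω ∂μ, ω ∉ A := by
    filter_upwards [hcontra, hcond, hT2m, hX1m] with ω hge hceq hT2 hX1mem hmem
    obtain ⟨hω1, hω2⟩ := hmem
    obtain ⟨ha, hb⟩ := hω1
    obtain ⟨hc', hd⟩ := hω2
    obtain ⟨he, hf⟩ := hT2
    have hsum : X1 ω + X2 ω < 0 := by linarith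
    have hX3T2 : X3 ω = T2 ω := by rw [hX3 ω, if_neg (not_le.2 hsum)]
    have hneg : X1 ω + X3 ω < 0 := by rw [hX3T2]; linarith
    have hgpos : τ < condExpGiven μ X1 Y ω := by
      rw [← hceq]
      have := hg_ge (X1 ω) ha.le hX1mem.2
      nlinarith
    nlinarith
  have : μ A = 0 := by
    have := hbadA
    rw [MeasureTheory.ae_iff] at this
    simpa using this
  rw [this] at hApos
  exact lt_irrefl _ hApos
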